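/- In the edge-form setting, let additionally t, 𝐝 : [0,1] → ℝ² be differentiable, φ₀ ∈ ℝ, g ∈ ℝ² and H a symmetric real 2×2 matrix, and define d₀₀ = φ₀, d₀₁ = ⟨g, t(0)⟩, d₀₂ = t(0)ᵀ H t(0) + ⟨g, t′(0)⟩, d₁₀ = (1/λ)⟨g, 𝐝(0)⟩, d₁₁ = (1/λ)(t(0)ᵀ H 𝐝(0) + ⟨g, 𝐝′(0)⟩). Then the function f_d satisfies: f_d(0,0) = φ₀, ∂₂f_d(0,0) = ⟨g, t(0)⟩, ∂₂²f_d(0,0) = t(0)ᵀ H t(0) + ⟨g, t′(0)⟩, ∂₁f_d(0,0) = ⟨g, α(0)𝐝(0) − β(0)t(0)⟩, and ∂₁∂₂f_d(0,0) = t(0)ᵀ H (α(0)𝐝(0) − β(0)t(0)) + ⟨g, (α𝐝)′(0) − (βt)′(0)⟩. -/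

import Mathlib

/-- Partial derivative with respect to the first argument. -/
noncomputable def pd1 {E : Type*} [NormedAddCommGroup E] [NormedSpace ℝ E]
    (f : ℝ × ℝ → E) (x : ℝ × ℝ) : E := deriv (fun s => f (s, x.2)) x.1

/-- Partial derivative with respect to the second argument. -/
noncomputable def pd2 {E : Type*} [NormedAddCommGroup E] [NormedSpace ℝ E]
    (f : ℝ × ℝ → E) (x : ℝ × ℝ) : E := deriv (fun s => f (x.1, s)) x.2

/-- The Euclidean inner product on `ℝ²`. -/
def dot2 (a b : ℝ × ℝ) : ℝ := a.1 * b.1 + a.2 * b.2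

/-- The bilinear form `aᵀ H b` on `ℝ²` given by a 2×2 matrix `H`. -/
def qf (H : Matrix (Fin 2) (Fin 2) ℝ) (a b : ℝ × ℝ) : ℝ :=
  a.1 * (H 0 0 * b.1 + H 0 1 * b.2) + a.2 * (H 1 0 * b.1 + H 1 1 * b.2)

/-- The generic element `f_d` of the five-dimensional vertex-edge space, with
coefficients `d = (d₀₀, d₀₁, d₀₂, d₁₀, d₁₁)`. -/
noncomputable def fEdge (cp₀ cp₁ cp₂ cm₀ cm₁ c₀ c₁ b₁ α β : ℝ → ℝ)
    (d : ℝ × ℝ × ℝ × ℝ × ℝ) : ℝ × ℝ → ℝ := fun ξ =>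
  d.1 * (cp₀ ξ.2 * c₀ ξ.1 - β ξ.2 * deriv cp₀ ξ.2 * c₁ ξ.1)
  + d.2.1 * (cp₁ ξ.2 * c₀ ξ.1 - β ξ.2 * deriv cp₁ ξ.2 * c₁ ξ.1)
  + d.2.2.1 * (cp₂ ξ.2 * c₀ ξ.1 - β ξ.2 * deriv cp₂ ξ.2 * c₁ ξ.1)
  + d.2.2.2.1 * (α ξ.2 * cm₀ ξ.2 * b₁ ξ.1)
  + d.2.2.2.2 * (α ξ.2 * cm₁ ξ.2 * b₁ ξ.1)

theorem stmt13aux (cp₀ cp₁ cp₂ cm₀ cm₁ c₀ c₁ b₁ α β : ℝ → ℝ)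
    (hcp₀ : ContDiff ℝ 2 cp₀) (hcp₁ : ContDiff ℝ 2 cp₁) (hcp₂ : ContDiff ℝ 2 cp₂)
    (hcp₀0 : cp₀ 0 = 1) (hcp₀1 : deriv cp₀ 0 = 0) (hcp₀2 : deriv (deriv cp₀) 0 = 0)
    (hcp₁0 : cp₁ 0 = 0) (hcp₁1 : deriv cp₁ 0 = 1) (hcp₁2 : deriv (deriv cp₁) 0 = 0)
    (hcp₂0 : cp₂ 0 = 0) (hcp₂1 : deriv cp₂ 0 = 0) (hcp₂2 : deriv (deriv cp₂) 0 = 1)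
    (hcm₀ : ContDiff ℝ 1 cm₀) (hcm₁ : ContDiff ℝ 1 cm₁)
    (hcm₀0 : cm₀ 0 = 1) (hcm₀1 : deriv cm₀ 0 = 0)
    (hcm₁0 : cm₁ 0 = 0) (hcm₁1 : deriv cm₁ 0 = 1)
    (hc₀ : ContDiff ℝ 1 c₀) (hc₁ : ContDiff ℝ 1 c₁) (hb₁ : ContDiff ℝ 1 b₁)
    (hc₀0 : c₀ 0 = 1) (hc₀1 : deriv c₀ 0 = 0)
    (hc₁0 : c₁ 0 = 0) (hc₁1 : deriv c₁ 0 = 1)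
    (lam : ℝ) (hb₁0 : b₁ 0 = 0) (hb₁1 : deriv b₁ 0 = lam)
    (hα : ContDiff ℝ 1 α) (hβ : ContDiff ℝ 1 β)
    (d00 d01 d02 d10 d11 : ℝ) :
    fEdge cp₀ cp₁ cp₂ cm₀ cm₁ c₀ c₁ b₁ α β (d00, d01, d02, d10, d11) (0, 0) = d00 ∧
    pd2 (fEdge cp₀ cp₁ cp₂ cm₀ cm₁ c₀ c₁ b₁ α β (d00, d01, d02, d10, d11)) (0, 0) = d01 ∧
    pd2 (pd2 (fEdge cp₀ cp₁ cp₂ cm₀ cm₁ c₀ c₁ b₁ α β (d00, d01, d02, d10, d11))) (0, 0) = d02 ∧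
    pd1 (fEdge cp₀ cp₁ cp₂ cm₀ cm₁ c₀ c₁ b₁ α β (d00, d01, d02, d10, d11)) (0, 0)
      = -(β 0) * d01 + lam * (d10 * α 0) ∧
    pd1 (pd2 (fEdge cp₀ cp₁ cp₂ cm₀ cm₁ c₀ c₁ b₁ α β (d00, d01, d02, d10, d11))) (0, 0)
      = (-(deriv β 0) * d01 - β 0 * d02) + lam * (d11 * α 0 + d10 * deriv α 0) := by
  set f := fEdge cp₀ cp₁ cp₂ cm₀ cm₁ c₀ c₁ b₁ α β (d00, d01, d02, d10, d11) with hfdef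
  set A : ℝ → ℝ := fun s => d00 * cp₀ s + d01 * cp₁ s + d02 * cp₂ s with hA
  set G : ℝ → ℝ := fun s => d00 * deriv cp₀ s + d01 * deriv cp₁ s + d02 * deriv cp₂ s with hG
  set B : ℝ → ℝ := fun s => -(β s) * G s with hB
  set C : ℝ → ℝ := fun s => (d10 * cm₀ s + d11 * cm₁ s) * α s with hC
  have hf : ∀ x s : ℝ, f (x, s) = A s * c₀ x + B s * c₁ x + C s * b₁ x := by
    intro x s
    simp only [hfdef, fEdge, hA, hB, hC, hG]
    ring
  -- smoothness of the derivatives of the C² functions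
  have hdcp₀ : ContDiff ℝ 1 (deriv cp₀) :=
    (contDiff_succ_iff_deriv.mp (show ContDiff ℝ (1+1) cp₀ by exact_mod_cast hcp₀)).2.2
  have hdcp₁ : ContDiff ℝ 1 (deriv cp₁) :=
    (contDiff_succ_iff_deriv.mp (show ContDiff ℝ (1+1) cp₁ by exact_mod_cast hcp₁)).2.2
  have hdcp₂ : ContDiff ℝ 1 (deriv cp₂) :=
    (contDiff_succ_iff_deriv.mp (show ContDiff ℝ (1+1) cp₂ by exact_mod_cast hcp₂)).2.2
  -- elementary HasDerivAt facts
  have D : ∀ (u : ℝ → ℝ), ContDiff ℝ 1 u → ∀ s, HasDerivAt u (deriv u s) s := fun u hu s =>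
    ((hu.differentiable one_ne_zero) s).hasDerivAt
  have Hcp₀ := D cp₀ (hcp₀.of_le (by norm_num))
  have Hcp₁ := D cp₁ (hcp₁.of_le (by norm_num))
  have Hcp₂ := D cp₂ (hcp₂.of_le (by norm_num))
  have Hdcp₀ := D _ hdcp₀
  have Hdcp₁ := D _ hdcp₁
  have Hdcp₂ := D _ hdcp₂
  have Hcm₀ := D cm₀ hcm₀
  have Hcm₁ := D cm₁ hcm₁
  have Hα := D α hα
  have Hβ := D β hβ
  have Hc₀' := D c₀ hc₀
  have Hc₁' := D c₁ hc₁
  have Hb₁' := D b₁ hb₁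
  -- derivatives of A, G, B, C
  have HA : ∀ s, HasDerivAt A (G s) s := fun s =>
    (((Hcp₀ s).const_mul d00).add ((Hcp₁ s).const_mul d01)).add ((Hcp₂ s).const_mul d02)
  have HG : ∀ s, HasDerivAt G
      (d00 * deriv (deriv cp₀) s + d01 * deriv (deriv cp₁) s + d02 * deriv (deriv cp₂) s) s :=
    fun s =>
    (((Hdcp₀ s).const_mul d00).add ((Hdcp₁ s).const_mul d01)).add ((Hdcp₂ s).const_mul d02)
  have HB : ∀ s, HasDerivAt B (-(deriv β s) * G s + -(β s) *
      (d00 * deriv (deriv cp₀) s + d01 * deriv (deriv cp₁) s + d02 * deriv (deriv cp₂) s)) s :=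
    fun s => ((Hβ s).neg).mul (HG s)
  have HC : ∀ s, HasDerivAt C
      ((d10 * deriv cm₀ s + d11 * deriv cm₁ s) * α s
        + (d10 * cm₀ s + d11 * cm₁ s) * deriv α s) s := fun s =>
    (((Hcm₀ s).const_mul d10).add ((Hcm₁ s).const_mul d11)).mul (Hα s)
  -- the two partial derivatives, as functions
  have hpd2 : ∀ x s : ℝ, pd2 f (x, s) = deriv A s * c₀ x + deriv B s * c₁ x + deriv C s * b₁ x := by
    intro x s
    have : (fun s' => f (x, s')) = fun s' => A s' * c₀ x + B s' * c₁ x + C s' * b₁ x :=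
      funext fun s' => hf x s'
    rw [show pd2 f (x, s) = deriv (fun s' => f (x, s')) s from rfl, this]
    have h : deriv (fun s' => A s' * c₀ x + B s' * c₁ x + C s' * b₁ x) s = _ := ((((HA s).mul_const (c₀ x)).add ((HB s).mul_const (c₁ x))).add
      ((HC s).mul_const (b₁ x))).deriv
    rw [h, (HA s).deriv, (HB s).deriv, (HC s).deriv]
  refine ⟨?_, ?_, ?_, ?_, ?_⟩
  · rw [hf 0 0, hc₀0, hc₁0, hb₁0, hA]
    simp [hcp₀0, hcp₁0, hcp₂0]
  · rw [hpd2 0 0, hc₀0, hc₁0, hb₁0, (HA 0).deriv, hG]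
    simp [hcp₀1, hcp₁1, hcp₂1]
  · have hpt : pd2 (pd2 f) (0, 0) = deriv (fun s => pd2 f (0, s)) 0 := rfl
    have h1 : (fun s => pd2 f ((0:ℝ), s)) = G := by
      funext s
      rw [hpd2 0 s, hc₀0, hc₁0, hb₁0, (HA s).deriv]
      ring
    rw [hpt, h1, (HG 0).deriv]
    simp [hcp₀2, hcp₁2, hcp₂2]
  · have hpt : pd1 f (0, 0) = deriv (fun x => f (x, 0)) 0 := rfl
    have h1 : (fun x => f (x, (0:ℝ))) = fun x => A 0 * c₀ x + B 0 * c₁ x + C 0 * b₁ x := by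
      funext x; exact hf x 0
    rw [hpt, h1]
    have hder : deriv (fun x => A 0 * c₀ x + B 0 * c₁ x + C 0 * b₁ x) 0 = _ := ((((Hc₀' 0).const_mul (A 0)).add ((Hc₁' 0).const_mul (B 0))).add
      ((Hb₁' 0).const_mul (C 0))).deriv
    rw [hder, hc₀1, hc₁1, hb₁1, hB, hC, hG]
    simp [hcp₀0, hcp₀1, hcp₁0, hcp₁1, hcp₂0, hcp₂1, hcm₀0, hcm₁0]
    ring
  · have hpt : pd1 (pd2 f) (0, 0) = deriv (fun x => pd2 f (x, 0)) 0 := rfl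
    have h1 : (fun x => pd2 f (x, (0:ℝ)))
        = fun x => deriv A 0 * c₀ x + deriv B 0 * c₁ x + deriv C 0 * b₁ x := by
      funext x; exact hpd2 x 0
    rw [hpt, h1]
    have hder : deriv (fun x => deriv A 0 * c₀ x + deriv B 0 * c₁ x + deriv C 0 * b₁ x) 0 = _ :=
      ((((Hc₀' 0).const_mul (deriv A 0)).add ((Hc₁' 0).const_mul (deriv B 0))).add
      ((Hb₁' 0).const_mul (deriv C 0))).deriv
    rw [hder, hc₀1, hc₁1, hb₁1, (HA 0).deriv, (HB 0).deriv, (HC 0).deriv, hG]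
    simp [hcp₀0, hcp₀1, hcp₀2, hcp₁0, hcp₁1, hcp₁2, hcp₂0, hcp₂1, hcp₂2,
      hcm₀0, hcm₀1, hcm₁0, hcm₁1]
    ring

/-- In the edge-form setting, with coefficients `d` built from a point value `φ₀`,
gradient `g` and symmetric Hessian `H` via the tangent `t` and transversal direction
`𝐝`, the function `f_d` attains the chain-rule Hermite data at `(0,0)`. -/
theorem stmt13 (cp₀ cp₁ cp₂ cm₀ cm₁ c₀ c₁ b₁ α β : ℝ → ℝ)
    (hcp₀ : ContDiff ℝ 2 cp₀) (hcp₁ : ContDiff ℝ 2 cp₁) (hcp₂ : ContDiff ℝ 2 cp₂)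
    (hcp₀0 : cp₀ 0 = 1) (hcp₀1 : deriv cp₀ 0 = 0) (hcp₀2 : deriv (deriv cp₀) 0 = 0)
    (hcp₁0 : cp₁ 0 = 0) (hcp₁1 : deriv cp₁ 0 = 1) (hcp₁2 : deriv (deriv cp₁) 0 = 0)
    (hcp₂0 : cp₂ 0 = 0) (hcp₂1 : deriv cp₂ 0 = 0) (hcp₂2 : deriv (deriv cp₂) 0 = 1)
    (hcm₀ : ContDiff ℝ 1 cm₀) (hcm₁ : ContDiff ℝ 1 cm₁)
    (hcm₀0 : cm₀ 0 = 1) (hcm₀1 : deriv cm₀ 0 = 0)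
    (hcm₁0 : cm₁ 0 = 0) (hcm₁1 : deriv cm₁ 0 = 1)
    (hc₀ : ContDiff ℝ 1 c₀) (hc₁ : ContDiff ℝ 1 c₁) (hb₁ : ContDiff ℝ 1 b₁)
    (hc₀0 : c₀ 0 = 1) (hc₀1 : deriv c₀ 0 = 0)
    (hc₁0 : c₁ 0 = 0) (hc₁1 : deriv c₁ 0 = 1)
    (lam : ℝ) (hlam : lam ≠ 0) (hb₁0 : b₁ 0 = 0) (hb₁1 : deriv b₁ 0 = lam)
    (hα : ContDiff ℝ 1 α) (hβ : ContDiff ℝ 1 β) (hα0 : α 0 ≠ 0)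
    (tv dv : ℝ → ℝ × ℝ) (htv : Differentiable ℝ tv) (hdv : Differentiable ℝ dv)
    (φ₀ : ℝ) (g : ℝ × ℝ) (H : Matrix (Fin 2) (Fin 2) ℝ) (hH : H.IsSymm)
    (d : ℝ × ℝ × ℝ × ℝ × ℝ)
    (hd : d = (φ₀, dot2 g (tv 0), qf H (tv 0) (tv 0) + dot2 g (deriv tv 0),
      (1 / lam) * dot2 g (dv 0),
      (1 / lam) * (qf H (tv 0) (dv 0) + dot2 g (deriv dv 0)))) :
    fEdge cp₀ cp₁ cp₂ cm₀ cm₁ c₀ c₁ b₁ α β d (0, 0) = φ₀ ∧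
    pd2 (fEdge cp₀ cp₁ cp₂ cm₀ cm₁ c₀ c₁ b₁ α β d) (0, 0) = dot2 g (tv 0) ∧
    pd2 (pd2 (fEdge cp₀ cp₁ cp₂ cm₀ cm₁ c₀ c₁ b₁ α β d)) (0, 0)
      = qf H (tv 0) (tv 0) + dot2 g (deriv tv 0) ∧
    pd1 (fEdge cp₀ cp₁ cp₂ cm₀ cm₁ c₀ c₁ b₁ α β d) (0, 0)
      = dot2 g (α 0 • dv 0 - β 0 • tv 0) ∧
    pd1 (pd2 (fEdge cp₀ cp₁ cp₂ cm₀ cm₁ c₀ c₁ b₁ α β d)) (0, 0)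
      = qf H (tv 0) (α 0 • dv 0 - β 0 • tv 0)
        + dot2 g (deriv (fun ξ => α ξ • dv ξ) 0 - deriv (fun ξ => β ξ • tv ξ) 0) := by
  subst hd
  obtain ⟨h1, h2, h3, h4, h5⟩ := stmt13aux cp₀ cp₁ cp₂ cm₀ cm₁ c₀ c₁ b₁ α β
    hcp₀ hcp₁ hcp₂ hcp₀0 hcp₀1 hcp₀2 hcp₁0 hcp₁1 hcp₁2 hcp₂0 hcp₂1 hcp₂2
    hcm₀ hcm₁ hcm₀0 hcm₀1 hcm₁0 hcm₁1 hc₀ hc₁ hb₁ hc₀0 hc₀1 hc₁0 hc₁1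
    lam hb₁0 hb₁1 hα hβ
    φ₀ (dot2 g (tv 0)) (qf H (tv 0) (tv 0) + dot2 g (deriv tv 0))
    ((1 / lam) * dot2 g (dv 0))
    ((1 / lam) * (qf H (tv 0) (dv 0) + dot2 g (deriv dv 0)))
  have hαd : deriv (fun ξ => α ξ • dv ξ) 0 = α 0 • deriv dv 0 + deriv α 0 • dv 0 :=
    (((hα.differentiable one_ne_zero) 0).hasDerivAt.smul (hdv 0).hasDerivAt).deriv
  have hβt : deriv (fun ξ => β ξ • tv ξ) 0 = β 0 • deriv tv 0 + deriv β 0 • tv 0 :=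
    (((hβ.differentiable one_ne_zero) 0).hasDerivAt.smul (htv 0).hasDerivAt).deriv
  refine ⟨h1, h2, h3, ?_, ?_⟩
  · rw [h4]
    simp only [dot2, Prod.fst_sub, Prod.snd_sub, Prod.smul_fst, Prod.smul_snd, smul_eq_mul]
    field_simp
    ring
  · rw [h5, hαd, hβt]
    simp only [dot2, qf, Prod.fst_sub, Prod.snd_sub, Prod.fst_add, Prod.snd_add,
      Prod.smul_fst, Prod.smul_snd, smul_eq_mul]
    field_simp
    ring
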